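/- Let M be a left A-module with a flat connection ∇ with respect to the universal differential calculus on A. Then the operation m·a := a m − Σ m_A a m_M makes M an A-bimodule; explicitly, for all a, b ∈ A and m ∈ M: (i) m·1 = m, (ii) (m·a)·b = m·(ab), and (iii) (a m)·b = a (m·b). -/

import Mathlib

set_option linter.unusedSectionVars false


open TensorProduct

variable (K A M : Type*) [Field K] [Ring A] [Algebra K A]
  [AddCommGroup M] [Module K M] [Module A M] [IsScalarTower K A M]

/-- The action map `A ⊗ M → M`, `a ⊗ m ↦ a • m`. -/
noncomputable def actMap : A ⊗[K] M →ₗ[K] M :=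
  TensorProduct.lift (LinearMap.mk₂ K (fun a m => a • m)
    (fun a b m => add_smul a b m)
    (fun k a m => smul_assoc k a m)
    (fun a m n => smul_add a m n)
    (fun k a m => (smul_comm k a m).symm))

/-- Left multiplication by `a : A` on a left `A`-module, as a `K`-linear map. -/
def lsmulMap (a : A) : M →ₗ[K] M where
  toFun := fun m => a • m
  map_add' := fun x y => smul_add a x y
  map_smul' := fun k m => (smul_comm k a m).symm

/-- `a ↦ a • n` as a `K`-linear map `A → M`. -/
def smulBy (n : M) : A →ₗ[K] M where
  toFun := fun a => a • n
  map_add' := fun a b => add_smul a b n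
  map_smul' := fun k a => smul_assoc k a n

/-- `D : M → A ⊗ M` is a connection with respect to the universal differential
calculus. -/
def IsConnection (D : M →ₗ[K] A ⊗[K] M) : Prop :=
  (∀ m : M, actMap K A M (D m) = 0) ∧
  ∀ (a : A) (m : M),
    D (a • m) = LinearMap.rTensor M (LinearMap.mulLeft K a) (D m)
      + (1 : A) ⊗ₜ[K] (a • m) - a ⊗ₜ[K] m

/-- Flatness of a connection: `Σ 1 ⊗ m_A ⊗ m_M = Σ m_A ⊗ D(m_M)`. -/
def IsFlatConnection (D : M →ₗ[K] A ⊗[K] M) : Prop :=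
  ∀ m : M, (1 : A) ⊗ₜ[K] (D m) = LinearMap.lTensor A D (D m)

/-- The induced right operation `m·a := a m − Σ m_A a m_M`. -/
noncomputable def rop (D : M →ₗ[K] A ⊗[K] M) (m : M) (a : A) : M :=
  a • m - actMap K A M (LinearMap.rTensor M (LinearMap.mulRight K a) (D m))

lemma actMap_tmul (a : A) (m : M) : actMap K A M (a ⊗ₜ[K] m) = a • m := rfl

noncomputable def muMap : A ⊗[K] (A ⊗[K] M) →ₗ[K] A ⊗[K] M :=
  (LinearMap.rTensor M (LinearMap.mul' K A)).comp
    (TensorProduct.assoc K A A M).symm.toLinearMap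

lemma muMap_tmul (x y : A) (z : M) :
    muMap K A M (x ⊗ₜ[K] (y ⊗ₜ[K] z)) = (x * y) ⊗ₜ[K] z := by
  simp [muMap]

lemma muMap_left (x : A) (u : A ⊗[K] M) :
    muMap K A M (x ⊗ₜ[K] u) = LinearMap.rTensor M (LinearMap.mulLeft K x) u := by
  induction u using TensorProduct.induction_on with
  | zero => simp
  | tmul y z => simp [muMap_tmul]
  | add u v hu hv => rw [tmul_add, map_add, hu, hv, map_add]

lemma actMap_mulLeft (a : A) (u : A ⊗[K] M) :
    actMap K A M (LinearMap.rTensor M (LinearMap.mulLeft K a) u) = a • actMap K A M u := by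
  induction u using TensorProduct.induction_on with
  | zero => simp
  | tmul y z => simp [actMap_tmul, mul_smul]
  | add u v hu hv => rw [map_add, map_add, hu, hv, map_add, smul_add]

lemma leibniz_act (D : M →ₗ[K] A ⊗[K] M) (hconn : IsConnection K A M D) (t : A ⊗[K] M) :
    D (actMap K A M t) = muMap K A M (LinearMap.lTensor A D t)
      + (1 : A) ⊗ₜ[K] actMap K A M t - t := by
  induction t using TensorProduct.induction_on with
  | zero => simp
  | tmul x z =>
      rw [actMap_tmul, hconn.2, LinearMap.lTensor_tmul, muMap_left]
  | add u v hu hv =>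
      rw [map_add, map_add, hu, hv, map_add, map_add, tmul_add]
      abel

lemma flat_key (D : M →ₗ[K] A ⊗[K] M) (hflat : IsFlatConnection K A M D) (a : A) (m : M) :
    muMap K A M (LinearMap.lTensor A D (LinearMap.rTensor M (LinearMap.mulRight K a) (D m)))
      = LinearMap.rTensor M (LinearMap.mulLeft K a) (D m) := by
  have h1 : LinearMap.lTensor A D (LinearMap.rTensor M (LinearMap.mulRight K a) (D m))
      = LinearMap.rTensor (A ⊗[K] M) (LinearMap.mulRight K a) (LinearMap.lTensor A D (D m)) := by
    rw [← LinearMap.comp_apply, LinearMap.lTensor_comp_rTensor,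
      ← LinearMap.rTensor_comp_lTensor, LinearMap.comp_apply]
  rw [h1, ← hflat m, LinearMap.rTensor_tmul, LinearMap.mulRight_apply, one_mul, muMap_left]

lemma D_rop (D : M →ₗ[K] A ⊗[K] M) (hconn : IsConnection K A M D)
    (hflat : IsFlatConnection K A M D) (a : A) (m : M) :
    D (rop K A M D m a) = (1 : A) ⊗ₜ[K] (rop K A M D m a) - a ⊗ₜ[K] m
      + LinearMap.rTensor M (LinearMap.mulRight K a) (D m) := by
  rw [rop, map_sub, hconn.2, leibniz_act K A M D hconn, flat_key K A M D hflat,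
    tmul_sub]
  abel


/-- If `M` carries a flat connection `D` with respect to the universal
differential calculus, then the induced right operation `m·a := a m − Σ m_A a m_M`
makes `M` an `A`-bimodule. -/
theorem flat_connection_gives_bimodule (D : M →ₗ[K] A ⊗[K] M)
    (hconn : IsConnection K A M D) (hflat : IsFlatConnection K A M D) :
    (∀ m : M, rop K A M D m 1 = m) ∧
    (∀ (a b : A) (m : M), rop K A M D (rop K A M D m a) b = rop K A M D m (a * b)) ∧
    (∀ (a b : A) (m : M), rop K A M D (a • m) b = a • rop K A M D m b) := by
  refine ⟨?_, ?_, ?_⟩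
  · intro m
    rw [rop, one_smul, LinearMap.mulRight_one, LinearMap.rTensor_id, LinearMap.id_apply,
      hconn.1, sub_zero]
  · intro a b m
    have h2 : LinearMap.rTensor M (LinearMap.mulRight K b)
        (LinearMap.rTensor M (LinearMap.mulRight K a) (D m))
        = LinearMap.rTensor M (LinearMap.mulRight K (a * b)) (D m) := by
      rw [LinearMap.mulRight_mul, LinearMap.rTensor_comp, LinearMap.comp_apply]
    rw [rop, D_rop K A M D hconn hflat, map_add, map_sub, map_add, map_sub, h2,
      LinearMap.rTensor_tmul, LinearMap.rTensor_tmul, LinearMap.mulRight_apply,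
      LinearMap.mulRight_apply, one_mul, actMap_tmul, actMap_tmul]
    simp only [rop, mul_smul]
    abel
  · intro a b m
    have h3 : LinearMap.rTensor M (LinearMap.mulRight K b)
        (LinearMap.rTensor M (LinearMap.mulLeft K a) (D m))
        = LinearMap.rTensor M (LinearMap.mulLeft K a)
          (LinearMap.rTensor M (LinearMap.mulRight K b) (D m)) := by
      have hc : (LinearMap.mulRight K b) ∘ₗ (LinearMap.mulLeft K a)
          = (LinearMap.mulLeft K a) ∘ₗ (LinearMap.mulRight K b) := by
        ext x; simp [mul_assoc]
      rw [← LinearMap.comp_apply (LinearMap.rTensor M (LinearMap.mulRight K b)),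
        ← LinearMap.rTensor_comp, hc, LinearMap.rTensor_comp, LinearMap.comp_apply]
    rw [rop, hconn.2]
    simp only [map_add, map_sub]
    rw [h3, actMap_mulLeft, LinearMap.rTensor_tmul, LinearMap.rTensor_tmul,
      LinearMap.mulRight_apply, LinearMap.mulRight_apply, one_mul, actMap_tmul, actMap_tmul]
    simp only [rop, smul_sub, mul_smul]
    abel
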